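/- arXiv:2506.10804 — 3 statements merged into one kernel-verified Lean document; each statement's English description precedes it below -/
import Mathlib

section
/- Let I = (t₀, t_f) be a bounded open interval, x₀ ∈ ℝ^{n_x}, and let f̃ : I × ℝ^{n_x} → ℝ^{n_x} be measurable in t ∈ I for each x ∈ ℝ^{n_x}, continuous in x ∈ ℝ^{n_x} for almost all t ∈ I, and suppose there exists an integrable function m : I → ℝ such that ‖f̃(t, x)‖ ≤ m(t) for almost all t ∈ I and all x ∈ ℝ^{n_x}. Then the initial value problem x'(t) = f̃(t, x(t)) for a.a. t ∈ I, x(t₀) = x₀ has a solution x ∈ W^{1,1}(I)^{n_x}; that is, there exists an absolutely continuous function x : [t₀, t_f] → ℝ^{n_x} with x(t) = x₀ + ∫_{t₀}^{t} f̃(s, x(s)) ds for all t ∈ [t₀, t_f], where s ↦ f̃(s, x(s)) is integrable. -/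
open MeasureTheory Set Filter Topology

section IvpAux

variable {nx : ℕ} {t0 tf : ℝ} {f : ℝ → (Fin nx → ℝ) → (Fin nx → ℝ)} {m : ℝ → ℝ}

/-- Carathéodory compositions are a.e. strongly measurable. -/
lemma ivp_aux_aesm
    (hfmeas : ∀ x : Fin nx → ℝ, Measurable fun t => f t x)
    (hfcont : ∀ᵐ t ∂(volume.restrict (Set.Ioo t0 tf)), Continuous fun x => f t x)
    {u : ℝ → (Fin nx → ℝ)} (hu : Measurable u) :
    AEStronglyMeasurable (fun s => f s (u s)) (volume.restrict (Set.Ioo t0 tf)) := by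
  have hu' : StronglyMeasurable u := hu.stronglyMeasurable
  have hmeas : ∀ n, Measurable fun s => f s (hu'.approx n s) := fun n =>
    (hu'.approx n).measurable_bind (fun b a => f a b) (fun b => hfmeas b)
  have : AEMeasurable (fun s => f s (u s)) (volume.restrict (Set.Ioo t0 tf)) := by
    refine aemeasurable_of_tendsto_metrizable_ae atTop
      (fun n => ((hmeas n).aemeasurable)) ?_
    filter_upwards [hfcont] with s hs
    exact (hs.tendsto (u s)).comp (hu'.tendsto_approx s)
  exact this.aestronglyMeasurable

/-- Carathéodory compositions are integrable. -/
lemma ivp_aux_intOn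
    (hfmeas : ∀ x : Fin nx → ℝ, Measurable fun t => f t x)
    (hfcont : ∀ᵐ t ∂(volume.restrict (Set.Ioo t0 tf)), Continuous fun x => f t x)
    (hm_int : IntegrableOn m (Set.Ioo t0 tf))
    (hbound : ∀ᵐ t ∂(volume.restrict (Set.Ioo t0 tf)), ∀ x : Fin nx → ℝ, ‖f t x‖ ≤ m t)
    {u : ℝ → (Fin nx → ℝ)} (hu : Measurable u) :
    IntegrableOn (fun s => f s (u s)) (Set.Ioo t0 tf) :=
  Integrable.mono' hm_int (ivp_aux_aesm hfmeas hfcont hu)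
    (hbound.mono fun s hs => hs (u s))

end IvpAux

/-- Clamp to the interval `[t0, tf]`. -/
noncomputable def ivpClamp (t0 tf r : ℝ) : ℝ := max t0 (min r tf)

lemma ivpClamp_mem {t0 tf : ℝ} (h : t0 ≤ tf) (r : ℝ) : ivpClamp t0 tf r ∈ Set.Icc t0 tf :=
  ⟨le_max_left _ _, max_le h (min_le_right _ _)⟩

lemma ivpClamp_of_mem {t0 tf r : ℝ} (hr : r ∈ Set.Icc t0 tf) : ivpClamp t0 tf r = r := by
  simp [ivpClamp, min_eq_left hr.2, max_eq_right hr.1]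

lemma ivpClamp_continuous (t0 tf : ℝ) : Continuous (ivpClamp t0 tf) :=
  continuous_const.max (continuous_id.min continuous_const)

lemma ivpClamp_mono (t0 tf : ℝ) : Monotone (ivpClamp t0 tf) := fun a b hab =>
  max_le_max le_rfl (min_le_min hab le_rfl)

lemma ivpClamp_lip (t0 tf a b : ℝ) : |ivpClamp t0 tf a - ivpClamp t0 tf b| ≤ |a - b| := by
  have h1 : |ivpClamp t0 tf a - ivpClamp t0 tf b| ≤ |min a tf - min b tf| := by
    rw [ivpClamp, ivpClamp, max_comm t0, max_comm t0]
    exact abs_max_sub_max_le_abs _ _ _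
  refine h1.trans ((abs_min_sub_min_le_max a tf b tf).trans ?_)
  simp

/-- The delayed (Tonelli) approximation iterates. -/
noncomputable def ivpIter (t0 tf : ℝ) (x0 : Fin nx → ℝ)
    (f : ℝ → (Fin nx → ℝ) → (Fin nx → ℝ)) (δ : ℝ) : ℕ → ℝ → (Fin nx → ℝ)
  | 0 => fun _ => x0
  | (j+1) => fun t =>
      x0 + ∫ s in t0..(ivpClamp t0 tf (t - δ)), f s (ivpIter t0 tf x0 f δ j s)

lemma ivpIter_cont {nx : ℕ} {t0 tf : ℝ} (htt : t0 ≤ tf) (x0 : Fin nx → ℝ)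
    {f : ℝ → (Fin nx → ℝ) → (Fin nx → ℝ)} {m : ℝ → ℝ}
    (hfmeas : ∀ x : Fin nx → ℝ, Measurable fun t => f t x)
    (hfcont : ∀ᵐ t ∂(volume.restrict (Set.Ioo t0 tf)), Continuous fun x => f t x)
    (hm_int : IntegrableOn m (Set.Ioo t0 tf))
    (hbound : ∀ᵐ t ∂(volume.restrict (Set.Ioo t0 tf)), ∀ x : Fin nx → ℝ, ‖f t x‖ ≤ m t)
    (δ : ℝ) (j : ℕ) : Continuous (ivpIter t0 tf x0 f δ j) := by
  induction j with
  | zero => exact continuous_const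
  | succ j ih =>
    have hint : IntegrableOn (fun s => f s (ivpIter t0 tf x0 f δ j s)) (Icc t0 tf) :=
      (integrableOn_Icc_iff_integrableOn_Ioo).mpr
        (ivp_aux_intOn hfmeas hfcont hm_int hbound ih.measurable)
    have hc : Continuous fun t =>
        ∫ s in Ioc t0 (ivpClamp t0 tf (t - δ)), f s (ivpIter t0 tf x0 f δ j s) :=
      (intervalIntegral.continuousOn_primitive hint).comp_continuous
        ((ivpClamp_continuous t0 tf).comp (continuous_id.sub continuous_const))
        (fun t => ivpClamp_mem htt _)
    have e : (fun t => x0 + ∫ s in t0..(ivpClamp t0 tf (t - δ)), f s (ivpIter t0 tf x0 f δ j s))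
        = fun t => x0 + ∫ s in Ioc t0 (ivpClamp t0 tf (t - δ)), f s (ivpIter t0 tf x0 f δ j s) := by
      funext t; rw [intervalIntegral.integral_of_le (ivpClamp_mem htt (t - δ)).1]
    show Continuous fun t => x0 + ∫ s in t0..(ivpClamp t0 tf (t - δ)), f s (ivpIter t0 tf x0 f δ j s)
    rw [e]
    exact continuous_const.add hc

lemma ivpIter_agree {nx : ℕ} {t0 tf : ℝ} (htt : t0 ≤ tf) (x0 : Fin nx → ℝ)
    (f : ℝ → (Fin nx → ℝ) → (Fin nx → ℝ)) {δ : ℝ} (hδ : 0 < δ) :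
    ∀ j : ℕ, ∀ t ≤ t0 + (j : ℝ) * δ,
      ivpIter t0 tf x0 f δ (j+1) t = ivpIter t0 tf x0 f δ j t := by
  intro j
  induction j with
  | zero =>
    intro t htle
    have h1 : t - δ ≤ t0 := by norm_num at htle; linarith
    have h2 : ivpClamp t0 tf (t - δ) = t0 := by
      rw [ivpClamp, min_eq_left (h1.trans htt), max_eq_left h1]
    simp [ivpIter, h2]
  | succ j ih =>
    intro t htle
    show (x0 + ∫ s in t0..(ivpClamp t0 tf (t - δ)), f s (ivpIter t0 tf x0 f δ (j+1) s))
        = x0 + ∫ s in t0..(ivpClamp t0 tf (t - δ)), f s (ivpIter t0 tf x0 f δ j s)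
    congr 1
    apply intervalIntegral.integral_congr
    intro s hs
    have hs1 : s ∈ Icc t0 (ivpClamp t0 tf (t - δ)) := by
      rwa [uIcc_of_le (ivpClamp_mem htt _).1] at hs
    have hs' : s ≤ t0 + (j : ℝ) * δ := by
      have h2 : ivpClamp t0 tf (t - δ) ≤ max t0 (t - δ) :=
        max_le_max le_rfl (min_le_left _ _)
      have h3 : max t0 (t - δ) ≤ t0 + (j : ℝ) * δ := by
        push_cast at htle
        have hj : (0:ℝ) ≤ (j : ℝ) * δ := by positivity
        exact max_le (by linarith) (by linarith)
      exact hs1.2.trans (h2.trans h3)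
    simp only []
    rw [ih s hs']

/-- Key estimate: difference of primitives of a Carathéodory composition is controlled by the
difference of primitives of the dominating function. -/
lemma ivp_key_estimate {nx : ℕ} {t0 tf : ℝ} (htt : t0 ≤ tf)
    {f : ℝ → (Fin nx → ℝ) → (Fin nx → ℝ)} {m : ℝ → ℝ} {u : ℝ → (Fin nx → ℝ)}
    (hGint : IntegrableOn (fun s => f s (u s)) (Set.Icc t0 tf))
    (hmIcc : IntegrableOn m (Set.Icc t0 tf))
    (hboundIcc : ∀ᵐ s ∂(volume.restrict (Set.Icc t0 tf)), ‖f s (u s)‖ ≤ m s)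
    {c1 c2 : ℝ} (h1 : c1 ∈ Set.Icc t0 tf) (h2 : c2 ∈ Set.Icc t0 tf) :
    ‖(∫ s in t0..c2, f s (u s)) - ∫ s in t0..c1, f s (u s)‖
      ≤ |(∫ s in t0..c2, m s) - ∫ s in t0..c1, m s| := by
  have ht0 : t0 ∈ Set.Icc t0 tf := ⟨le_rfl, htt⟩
  have iiG : ∀ a b, a ∈ Set.Icc t0 tf → b ∈ Set.Icc t0 tf →
      IntervalIntegrable (fun s => f s (u s)) volume a b := fun a b ha hb =>
    (hGint.mono_set (uIcc_subset_Icc ha hb)).intervalIntegrable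
  have iim : ∀ a b, a ∈ Set.Icc t0 tf → b ∈ Set.Icc t0 tf →
      IntervalIntegrable m volume a b := fun a b ha hb =>
    (hmIcc.mono_set (uIcc_subset_Icc ha hb)).intervalIntegrable
  rw [intervalIntegral.integral_interval_sub_left (iiG t0 c2 ht0 h2) (iiG t0 c1 ht0 h1),
    intervalIntegral.integral_interval_sub_left (iim t0 c2 ht0 h2) (iim t0 c1 ht0 h1)]
  refine intervalIntegral.norm_integral_le_abs_of_norm_le ?_ (iim c1 c2 h1 h2)
  exact ae_restrict_of_ae_restrict_of_subset
    ((uIoc_subset_uIcc).trans (uIcc_subset_Icc h1 h2)) hboundIcc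

set_option maxHeartbeats 1000000 in
set_option synthInstance.maxHeartbeats 400000 in
/-- Carathéodory existence, Theorem 2.3, first part.
Let `I = (t₀, t_f)` be a bounded open interval, `x₀ ∈ ℝ^{n_x}`, and let
`f̃ : I × ℝ^{n_x} → ℝ^{n_x}` be measurable in `t` for each `x`, continuous in `x` for a.a. `t ∈ I`,
and bounded by an integrable function `m`.  Then the IVP `x' = f̃(t, x)`, `x(t₀) = x₀` has a
solution in `W^{1,1}(I)^{n_x}`, i.e. there is a continuous `x` on `[t₀, t_f]` with
`x(t) = x₀ + ∫_{t₀}^t f̃(s, x(s)) ds` for all `t ∈ [t₀, t_f]`, the integrand being integrable. -/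
theorem ivp_caratheodory_existence
    {nx : ℕ} (t0 tf : ℝ) (ht : t0 < tf) (x0 : Fin nx → ℝ)
    (f : ℝ → (Fin nx → ℝ) → (Fin nx → ℝ))
    (m : ℝ → ℝ)
    (hfmeas : ∀ x : Fin nx → ℝ, Measurable fun t => f t x)
    (hfcont : ∀ᵐ t ∂(volume.restrict (Set.Ioo t0 tf)), Continuous fun x => f t x)
    (hm_int : IntegrableOn m (Set.Ioo t0 tf))
    (hbound : ∀ᵐ t ∂(volume.restrict (Set.Ioo t0 tf)), ∀ x : Fin nx → ℝ, ‖f t x‖ ≤ m t) :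
    ∃ x : ℝ → (Fin nx → ℝ),
      ContinuousOn x (Set.Icc t0 tf) ∧
      IntegrableOn (fun s => f s (x s)) (Set.Ioo t0 tf) ∧
      ∀ t ∈ Set.Icc t0 tf, x t = x0 + ∫ s in t0..t, f s (x s) := by
  have htt : t0 ≤ tf := ht.le
  have ht0mem : t0 ∈ Set.Icc t0 tf := ⟨le_rfl, htt⟩
  -- move a.e. statements to `Icc`
  have hrIcc : volume.restrict (Set.Ioo t0 tf) = volume.restrict (Set.Icc t0 tf) :=
    restrict_Ioo_eq_restrict_Icc
  have hfcontIcc : ∀ᵐ t ∂(volume.restrict (Set.Icc t0 tf)), Continuous fun x => f t x := by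
    rwa [← hrIcc]
  have hboundIcc : ∀ᵐ t ∂(volume.restrict (Set.Icc t0 tf)),
      ∀ x : Fin nx → ℝ, ‖f t x‖ ≤ m t := by rwa [← hrIcc]
  have hmIcc : IntegrableOn m (Set.Icc t0 tf) := (integrableOn_Icc_iff_integrableOn_Ioo).mpr hm_int
  -- composition integrable on `Icc`
  have hcomp : ∀ {u : ℝ → (Fin nx → ℝ)}, Measurable u →
      IntegrableOn (fun s => f s (u s)) (Set.Icc t0 tf) := fun hu =>
    (integrableOn_Icc_iff_integrableOn_Ioo).mpr (ivp_aux_intOn hfmeas hfcont hm_int hbound hu)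
  -- the primitive of `m` and its continuity
  set P : ℝ → ℝ := fun r => ∫ s in t0..r, m s with hP_def
  have hPcontOn : ContinuousOn P (Set.Icc t0 tf) := by
    exact (intervalIntegral.continuousOn_primitive hmIcc).congr fun r hr =>
      intervalIntegral.integral_of_le hr.1
  -- the delayed approximations
  set δ : ℕ → ℝ := fun k => (tf - t0) / (k + 1) with hδ_def
  have hδpos : ∀ k, 0 < δ k := fun k => div_pos (by linarith) (by positivity)
  set u : ℕ → ℝ → (Fin nx → ℝ) := fun k => ivpIter t0 tf x0 f (δ k) (k + 1) with hu_def
  have hucont : ∀ k, Continuous (u k) := fun k =>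
    ivpIter_cont htt x0 hfmeas hfcont hm_int hbound (δ k) (k + 1)
  have hufix : ∀ k, ∀ t ∈ Set.Icc t0 tf,
      u k t = x0 + ∫ s in t0..(ivpClamp t0 tf (t - δ k)), f s (u k s) := by
    intro k t htmem
    have hle : t ≤ t0 + ((k + 1 : ℕ) : ℝ) * δ k := by
      have : ((k : ℝ) + 1) * ((tf - t0) / ((k : ℝ) + 1)) = tf - t0 := by
        field_simp
      push_cast
      rw [hδ_def]
      simp only []
      linarith [htmem.2, this]
    have hagree := ivpIter_agree htt x0 f (hδpos k) (k + 1) t hle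
    exact hagree.symm
  -- key estimates for the `u k`
  have hKE : ∀ k : ℕ, ∀ c1 c2, c1 ∈ Set.Icc t0 tf → c2 ∈ Set.Icc t0 tf →
      ‖(∫ s in t0..c2, f s (u k s)) - ∫ s in t0..c1, f s (u k s)‖ ≤ |P c2 - P c1| :=
    fun k c1 c2 h1 h2 => ivp_key_estimate htt (hcomp (hucont k).measurable) hmIcc
      (hboundIcc.mono fun s hs => hs (u k s)) h1 h2
  have hdiff : ∀ k : ℕ, ∀ a b, a ∈ Set.Icc t0 tf → b ∈ Set.Icc t0 tf →
      ‖u k b - u k a‖ ≤ |P (ivpClamp t0 tf (b - δ k)) - P (ivpClamp t0 tf (a - δ k))| := by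
    intro k a b ha hb
    rw [hufix k a ha, hufix k b hb, add_sub_add_left_eq_sub]
    exact hKE k _ _ (ivpClamp_mem htt _) (ivpClamp_mem htt _)
  -- uniform bound
  set C : ℝ := ∫ s in Set.Icc t0 tf, |m s| with hC_def
  have hPabs : ∀ c ∈ Set.Icc t0 tf, |P c| ≤ C := by
    intro c hc
    have e1 : P c = ∫ s in Ioc t0 c, m s := intervalIntegral.integral_of_le hc.1
    rw [e1, ← Real.norm_eq_abs]
    refine (norm_integral_le_integral_norm _).trans ?_
    refine setIntegral_mono_set hmIcc.abs ?_ ?_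
    · exact Eventually.of_forall fun s => abs_nonneg _
    · exact HasSubset.Subset.eventuallyLE fun s hs => ⟨hs.1.le, hs.2.trans hc.2⟩
  have hclt0 : ∀ k, ivpClamp t0 tf (t0 - δ k) = t0 := fun k => by
    rw [ivpClamp, min_eq_left ((sub_le_self t0 (hδpos k).le).trans htt),
      max_eq_left (sub_le_self t0 (hδpos k).le)]
  have hP0 : P t0 = 0 := intervalIntegral.integral_same
  have hball : ∀ k, ∀ s ∈ Set.Icc t0 tf, ‖u k s - x0‖ ≤ C := by
    intro k s hs
    have h0 : u k t0 = x0 := by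
      have h1 := hufix k t0 ht0mem
      rw [hclt0 k] at h1
      simpa [intervalIntegral.integral_same] using h1
    calc ‖u k s - x0‖ = ‖u k s - u k t0‖ := by rw [h0]
      _ ≤ |P (ivpClamp t0 tf (s - δ k)) - P (ivpClamp t0 tf (t0 - δ k))| :=
          hdiff k t0 s ht0mem hs
      _ = |P (ivpClamp t0 tf (s - δ k))| := by rw [hclt0 k, hP0, sub_zero]
      _ ≤ C := hPabs _ (ivpClamp_mem htt _)
  -- pass to the space of bounded continuous functions on `Icc t0 tf`
  let F : ℕ → BoundedContinuousFunction (Set.Icc t0 tf) (Fin nx → ℝ) := fun k =>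
    BoundedContinuousFunction.mkOfCompact
      ⟨fun p => u k p.1, (hucont k).comp continuous_subtype_val⟩
  have hFA : ∀ (g : BoundedContinuousFunction (Set.Icc t0 tf) (Fin nx → ℝ))
      (p : Set.Icc t0 tf), g ∈ Set.range F → g p ∈ Metric.closedBall x0 C := by
    rintro g p ⟨k, rfl⟩
    rw [Metric.mem_closedBall, dist_eq_norm]
    exact hball k p.1 p.2
  have hFeq : Equicontinuous
      fun (g : Set.range F) => ((g : BoundedContinuousFunction _ _) : Set.Icc t0 tf → (Fin nx → ℝ)) := by
    intro p0
    rw [Metric.equicontinuousAt_iff]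
    intro ε hε
    obtain ⟨η, hη, hηP⟩ := Metric.uniformContinuousOn_iff.mp
      (isCompact_Icc.uniformContinuousOn_of_continuous hPcontOn) ε hε
    refine ⟨η, hη, fun p hpp0 i => ?_⟩
    obtain ⟨g, k, rfl⟩ := i
    show dist (F k p0) (F k p) < ε
    have h1 : dist (F k p0) (F k p)
        ≤ |P (ivpClamp t0 tf (p.1 - δ k)) - P (ivpClamp t0 tf (p0.1 - δ k))| := by
      rw [dist_eq_norm, norm_sub_rev]
      exact hdiff k p0.1 p.1 p0.2 p.2
    refine h1.trans_lt ?_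
    rw [← Real.dist_eq]
    refine hηP _ (ivpClamp_mem htt _) _ (ivpClamp_mem htt _) ?_
    rw [Real.dist_eq]
    refine (ivpClamp_lip t0 tf _ _).trans_lt ?_
    have : (p.1 - δ k) - (p0.1 - δ k) = p.1 - p0.1 := by ring
    rw [this, ← Real.dist_eq]
    exact hpp0
  obtain ⟨y, hy, φ, hφ, hconv⟩ := (BoundedContinuousFunction.arzela_ascoli
    (Metric.closedBall x0 C) (isCompact_closedBall x0 C) (Set.range F) hFA
    hFeq).tendsto_subseq (fun k => subset_closure (Set.mem_range_self k))
  -- the candidate solution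
  set x : ℝ → (Fin nx → ℝ) := fun t => y ⟨ivpClamp t0 tf t, ivpClamp_mem htt t⟩ with hx_def
  have hxcont : Continuous x :=
    y.continuous.comp (Continuous.subtype_mk (ivpClamp_continuous t0 tf) _)
  have hxIcc : ∀ s (hs : s ∈ Set.Icc t0 tf), x s = y ⟨s, hs⟩ := fun s hs =>
    congrArg y (Subtype.ext (ivpClamp_of_mem hs))
  have hpt : ∀ s (hs : s ∈ Set.Icc t0 tf),
      Tendsto (fun j => u (φ j) s) atTop (𝓝 (x s)) := by
    intro s hs
    rw [hxIcc s hs]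
    refine tendsto_iff_dist_tendsto_zero.mpr
      (squeeze_zero (g := fun j => dist (F (φ j)) y) (fun j => dist_nonneg) (fun j => ?_)
        (tendsto_iff_dist_tendsto_zero.mp hconv))
    have hd := BoundedContinuousFunction.dist_coe_le_dist (f := F (φ j)) (g := y)
      (⟨s, hs⟩ : Set.Icc t0 tf)
    exact hd
  have hxint : IntegrableOn (fun s => f s (x s)) (Set.Ioo t0 tf) :=
    ivp_aux_intOn hfmeas hfcont hm_int hbound hxcont.measurable
  refine ⟨x, hxcont.continuousOn, hxint, ?_⟩
  intro t htmem
  have hsub : Set.Ioc t0 t ⊆ Set.Icc t0 tf := fun s hs => ⟨hs.1.le, hs.2.trans htmem.2⟩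
  -- the delays tend to zero
  have hδto : Tendsto (fun j => δ (φ j)) atTop (𝓝 0) := by
    have hb : ∀ j : ℕ, δ (φ j) ≤ (tf - t0) / (j + 1) := by
      intro j
      apply div_le_div_of_nonneg_left (by linarith) (by positivity)
      have h1 : j ≤ φ j := hφ.le_apply
      have h2 : (j : ℝ) + 1 ≤ (φ j : ℝ) + 1 := by exact_mod_cast Nat.succ_le_succ h1
      linarith
    refine squeeze_zero (fun j => (hδpos _).le) hb ?_
    have h2 : Tendsto (fun j : ℕ => (tf - t0) * (1 / ((j : ℝ) + 1))) atTop
        (𝓝 ((tf - t0) * 0)) := tendsto_one_div_add_atTop_nhds_zero_nat.const_mul _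
    simpa [mul_one_div, div_eq_mul_inv] using h2
  set c : ℕ → ℝ := fun j => ivpClamp t0 tf (t - δ (φ j)) with hc_def
  have hcto : Tendsto c atTop (𝓝 t) := by
    have h1 : Tendsto (fun j => t - δ (φ j)) atTop (𝓝 (t - 0)) :=
      tendsto_const_nhds.sub hδto
    have h2 := ((ivpClamp_continuous t0 tf).tendsto (t - 0)).comp h1
    rw [sub_zero, ivpClamp_of_mem htmem] at h2
    exact h2
  have hPc : Tendsto (fun j => P (c j)) atTop (𝓝 (P t)) := by
    have hcw : Tendsto c atTop (𝓝[Set.Icc t0 tf] t) :=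
      tendsto_nhdsWithin_iff.mpr ⟨hcto, Eventually.of_forall fun j => ivpClamp_mem htt _⟩
    exact (hPcontOn t htmem).tendsto.comp hcw
  -- dominated convergence for the undelayed integrals
  have hterm1 : Tendsto (fun j => ∫ s in t0..t, f s (u (φ j) s)) atTop
      (𝓝 (∫ s in t0..t, f s (x s))) := by
    rw [intervalIntegral.integral_of_le htmem.1]
    have e : (fun j => ∫ s in t0..t, f s (u (φ j) s))
        = fun j => ∫ s in Set.Ioc t0 t, f s (u (φ j) s) := by
      funext j; exact intervalIntegral.integral_of_le htmem.1
    rw [e]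
    refine tendsto_integral_of_dominated_convergence m ?_ ?_ ?_ ?_
    · intro j
      have h1 := ivp_aux_aesm hfmeas hfcont (hucont (φ j)).measurable
      rw [hrIcc] at h1
      exact h1.mono_measure (Measure.restrict_mono hsub le_rfl)
    · exact hmIcc.mono_set hsub
    · intro j
      exact ae_restrict_of_ae_restrict_of_subset hsub (hboundIcc.mono fun s hs => hs _)
    · filter_upwards [ae_restrict_of_ae_restrict_of_subset hsub hfcontIcc,
        ae_restrict_mem measurableSet_Ioc] with s hcs hsmem
      exact (hcs.tendsto (x s)).comp (hpt s (hsub hsmem))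
  -- the error terms vanish
  have herrb : ∀ j, ‖(∫ s in t0..t, f s (u (φ j) s)) - ∫ s in t0..(c j), f s (u (φ j) s)‖
      ≤ |P t - P (c j)| := fun j => hKE (φ j) (c j) t (ivpClamp_mem htt _) htmem
  have herr : Tendsto (fun j => (∫ s in t0..t, f s (u (φ j) s))
      - ∫ s in t0..(c j), f s (u (φ j) s)) atTop (𝓝 0) := by
    refine squeeze_zero_norm herrb ?_
    have h2 : Tendsto (fun j => |P t - P (c j)|) atTop (𝓝 |P t - P t|) :=
      (tendsto_const_nhds.sub hPc).abs
    simpa using h2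
  have hterm2 : Tendsto (fun j => ∫ s in t0..(c j), f s (u (φ j) s)) atTop
      (𝓝 (∫ s in t0..t, f s (x s))) := by
    have h3 := hterm1.sub herr
    simpa [sub_sub_cancel] using h3
  have hlim2 : Tendsto (fun j => u (φ j) t) atTop
      (𝓝 (x0 + ∫ s in t0..t, f s (x s))) := by
    refine (tendsto_const_nhds.add hterm2).congr fun j => ?_
    exact (hufix (φ j) t htmem).symm
  exact tendsto_nhds_unique (hpt t htmem) hlim2
end

section
/- Let I = (t₀, t_f) be a bounded open interval. Then the evaluation (Nemytskii) operator Φ : L^∞(I)^{n_y} × (G²(I))^{m} → L^∞(I)^{m} defined by Φ(y, h) := h(·, y(·)) is continuously Fréchet differentiable, with derivative [Φ'(y, h)(δy, δh)](t) = h_y(t, y(t)) δy(t) + δh(t, y(t)), where h_y denotes the partial Jacobian of h with respect to its second argument. -/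
open MeasureTheory Set
open scoped NNReal ENNReal

noncomputable section

/-- The restriction of Lebesgue measure to the interval `I = (t₀, t_f)`. -/
def μI (t0 tf : ℝ) : Measure ℝ := volume.restrict (Set.Ioo t0 tf)

/-- `L^∞(I)^n` (extended) norm: essential supremum of `‖x(t)‖` over `I`. -/
def eLinf {n : ℕ} (t0 tf : ℝ) (x : ℝ → (Fin n → ℝ)) : ℝ≥0∞ :=
  essSup (fun t => (‖x t‖₊ : ℝ≥0∞)) (μI t0 tf)

/-- Membership in `L^∞(I)^n`: a.e.-measurable and essentially bounded. -/
def MemLinf {n : ℕ} (t0 tf : ℝ) (x : ℝ → (Fin n → ℝ)) : Prop :=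
  AEStronglyMeasurable x (μI t0 tf) ∧ eLinf t0 tf x < ⊤

/-- The (extended) `G^s(I)`-norm of `h : I × ℝ^{n_y} → ℝ^m`. -/
def gNormE {ny m : ℕ} (t0 tf : ℝ) (s : ℕ)
    (h : ℝ → (Fin ny → ℝ) → (Fin m → ℝ)) : ℝ≥0∞ :=
  ∑ k ∈ Finset.range (s + 1),
    essSup (fun t => ⨆ y : Fin ny → ℝ, (‖iteratedFDeriv ℝ k (h t) y‖₊ : ℝ≥0∞)) (μI t0 tf)

/-- Membership in the Banach space `(G^s(I))^m`. -/
def MemG {ny m : ℕ} (t0 tf : ℝ) (s : ℕ) (h : ℝ → (Fin ny → ℝ) → (Fin m → ℝ)) : Prop :=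
  (∀ y, Measurable fun t => h t y) ∧
  (∀ᵐ t ∂(μI t0 tf), ContDiff ℝ (s : ℕ∞) (h t)) ∧
  gNormE t0 tf s h < ⊤

/-- The evaluation (Nemytskii) operator `Φ(y, h) := h(·, y(·))`. -/
def evalOp {ny m : ℕ} (y : ℝ → (Fin ny → ℝ))
    (h : ℝ → (Fin ny → ℝ) → (Fin m → ℝ)) : ℝ → (Fin m → ℝ) :=
  fun t => h t (y t)

/-- Its claimed Fréchet derivative at `(y, h)` in direction `(δy, δh)`:
`[Φ'(y,h)(δy,δh)](t) = h_y(t, y(t)) δy(t) + δh(t, y(t))`. -/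
def evalOpDeriv {ny m : ℕ} (y : ℝ → (Fin ny → ℝ))
    (h δh : ℝ → (Fin ny → ℝ) → (Fin m → ℝ)) (δy : ℝ → (Fin ny → ℝ)) : ℝ → (Fin m → ℝ) :=
  fun t => (fderiv ℝ (h t) (y t)) (δy t) + δh t (y t)

section Aux
set_option linter.unusedSectionVars false
variable {E F : Type*} [NormedAddCommGroup E] [NormedSpace ℝ E]
  [NormedAddCommGroup F] [NormedSpace ℝ F]

lemma norm_fderiv_eq_iter_one (f : E → F) (x : E) :
    ‖fderiv ℝ f x‖ = ‖iteratedFDeriv ℝ 1 f x‖ := by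
  rw [← norm_iteratedFDeriv_fderiv (n := 0), norm_iteratedFDeriv_zero]

lemma norm_fderiv_fderiv (f : E → F) (x : E) :
    ‖fderiv ℝ (fderiv ℝ f) x‖ = ‖iteratedFDeriv ℝ 2 f x‖ := by
  rw [norm_fderiv_eq_iter_one, norm_iteratedFDeriv_fderiv (n := 1)]

lemma lip_of_fderiv {f : E → F} (hf : Differentiable ℝ f) {C : ℝ}
    (hC : ∀ x, ‖fderiv ℝ f x‖ ≤ C) (a b : E) : ‖f a - f b‖ ≤ C * ‖a - b‖ :=
  convex_univ.norm_image_sub_le_of_norm_fderiv_le (fun x _ => hf x) (fun x _ => hC x)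
    trivial trivial

lemma lip_of_iter_one {f : E → F} (hf : Differentiable ℝ f) {C : ℝ}
    (hC : ∀ x, ‖iteratedFDeriv ℝ 1 f x‖ ≤ C) (a b : E) : ‖f a - f b‖ ≤ C * ‖a - b‖ :=
  lip_of_fderiv hf (fun x => (norm_fderiv_eq_iter_one f x) ▸ hC x) a b

lemma fderiv_lip {f : E → F} (hf : ContDiff ℝ 2 f) {C : ℝ}
    (hC : ∀ x, ‖iteratedFDeriv ℝ 2 f x‖ ≤ C) (a b : E) :
    ‖fderiv ℝ f a - fderiv ℝ f b‖ ≤ C * ‖a - b‖ := by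
  have h1 : ContDiff ℝ 1 (fderiv ℝ f) := hf.fderiv_right (by norm_num)
  exact lip_of_fderiv (h1.differentiable (by norm_num))
    (fun x => by rw [norm_fderiv_fderiv]; exact hC x) a b

lemma taylor_sq {f : E → F} (hf : ContDiff ℝ 2 f) {C : ℝ}
    (hC : ∀ x, ‖iteratedFDeriv ℝ 2 f x‖ ≤ C) (hC0 : 0 ≤ C) (a v : E) :
    ‖f (a + v) - f a - fderiv ℝ f a v‖ ≤ C * ‖v‖ * ‖v‖ := by
  have hd : Differentiable ℝ f := hf.differentiable (by norm_num)
  set L := fderiv ℝ f a with hL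
  set g : E → F := fun x => f x - L x with hg
  have hgd : ∀ x, DifferentiableAt ℝ g x := fun x => (hd x).sub L.differentiableAt
  have hgf : ∀ x, fderiv ℝ g x = fderiv ℝ f x - L := by
    intro x
    rw [hg, fderiv_fun_sub (hd x) L.differentiableAt, L.fderiv]
  have key : ∀ x ∈ Metric.closedBall a ‖v‖, ‖fderiv ℝ g x‖ ≤ C * ‖v‖ := by
    intro x hx
    rw [hgf x, hL]
    calc ‖fderiv ℝ f x - fderiv ℝ f a‖ ≤ C * ‖x - a‖ := fderiv_lip hf hC x a
      _ ≤ C * ‖v‖ := by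
          apply mul_le_mul_of_nonneg_left _ hC0
          simpa [dist_eq_norm] using hx
  have hmem1 : a ∈ Metric.closedBall a ‖v‖ := Metric.mem_closedBall_self (norm_nonneg v)
  have hmem2 : a + v ∈ Metric.closedBall a ‖v‖ := by
    simp [Metric.mem_closedBall, dist_eq_norm]
  have hmv := (convex_closedBall a ‖v‖).norm_image_sub_le_of_norm_fderiv_le
    (fun x _ => hgd x) key hmem1 hmem2
  have hsimp : g (a + v) - g a = f (a + v) - f a - L v := by
    have h2 : L (a + v) = L a + L v := by rw [map_add]
    simp only [hg, h2]; abel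
  have hnv : ‖a + v - a‖ = ‖v‖ := by rw [add_sub_cancel_left]
  rw [hsimp, hnv] at hmv
  exact hmv

lemma enorm_le_toReal {x : F} {M : ℝ≥0∞} (hM : M ≠ ⊤)
    (hx : (‖x‖₊ : ℝ≥0∞) ≤ M) : ‖x‖ ≤ M.toReal := by
  rw [← ENNReal.coe_toNNReal hM, ENNReal.coe_le_coe] at hx
  exact_mod_cast hx

lemma enn_est (x : F) (v : E) (c d : ℝ≥0∞) (hc : c ≠ ⊤) (hd : d ≠ ⊤)
    (hx : ‖x‖ ≤ c.toReal * ‖v‖ * ‖v‖ + d.toReal * ‖v‖) :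
    (‖x‖₊ : ℝ≥0∞) ≤ c * ‖v‖₊ * ‖v‖₊ + d * ‖v‖₊ := by
  rw [← ENNReal.ofReal_coe_nnreal, coe_nnnorm]
  calc ENNReal.ofReal ‖x‖
      ≤ ENNReal.ofReal (c.toReal * ‖v‖ * ‖v‖ + d.toReal * ‖v‖) :=
        ENNReal.ofReal_le_ofReal hx
    _ ≤ c * ‖v‖₊ * ‖v‖₊ + d * ‖v‖₊ := by
        rw [ENNReal.ofReal_add (by positivity) (by positivity),
          ENNReal.ofReal_mul (by positivity), ENNReal.ofReal_mul (by positivity),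
          ENNReal.ofReal_mul (by positivity)]
        simp [ENNReal.ofReal_toReal hc, ENNReal.ofReal_toReal hd,
          ofReal_norm', enorm_eq_nnnorm]

lemma enn_est2 (x : F) (u v : E) (c d e : ℝ≥0∞) (hc : c ≠ ⊤) (hd : d ≠ ⊤) (he : e ≠ ⊤)
    (hx : ‖x‖ ≤ d.toReal * ‖v‖ + c.toReal * ‖u‖ * ‖v‖ + e.toReal * ‖u‖) :
    (‖x‖₊ : ℝ≥0∞) ≤ d * ‖v‖₊ + c * ‖u‖₊ * ‖v‖₊ + e * ‖u‖₊ := by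
  rw [← ENNReal.ofReal_coe_nnreal, coe_nnnorm]
  calc ENNReal.ofReal ‖x‖
      ≤ ENNReal.ofReal (d.toReal * ‖v‖ + c.toReal * ‖u‖ * ‖v‖ + e.toReal * ‖u‖) :=
        ENNReal.ofReal_le_ofReal hx
    _ ≤ d * ‖v‖₊ + c * ‖u‖₊ * ‖v‖₊ + e * ‖u‖₊ := by
        rw [ENNReal.ofReal_add (by positivity) (by positivity),
          ENNReal.ofReal_add (by positivity) (by positivity),
          ENNReal.ofReal_mul (by positivity), ENNReal.ofReal_mul (by positivity),
          ENNReal.ofReal_mul (by positivity), ENNReal.ofReal_mul (by positivity)]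
        simp [ENNReal.ofReal_toReal hc, ENNReal.ofReal_toReal hd,
          ENNReal.ofReal_toReal he, ofReal_norm', enorm_eq_nnnorm]

end Aux

section MeasAux
variable {ny m : ℕ}

lemma Mk_le_gNorm (t0 tf : ℝ) {k : ℕ} (hk : k < 3) (h : ℝ → (Fin ny → ℝ) → (Fin m → ℝ)) :
    essSup (fun t => ⨆ y : Fin ny → ℝ, (‖iteratedFDeriv ℝ k (h t) y‖₊ : ℝ≥0∞)) (μI t0 tf)
      ≤ gNormE t0 tf 2 h := by
  unfold gNormE
  exact Finset.single_le_sum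
    (f := fun k => essSup
      (fun t => ⨆ y : Fin ny → ℝ, (‖iteratedFDeriv ℝ k (h t) y‖₊ : ℝ≥0∞)) (μI t0 tf))
    (fun _ _ => zero_le) (Finset.mem_range.mpr hk)

lemma ae_iter_bound (t0 tf : ℝ) (k : ℕ) (h : ℝ → (Fin ny → ℝ) → (Fin m → ℝ)) :
    ∀ᵐ t ∂ μI t0 tf, ∀ x : Fin ny → ℝ, (‖iteratedFDeriv ℝ k (h t) x‖₊ : ℝ≥0∞)
      ≤ essSup (fun t => ⨆ y : Fin ny → ℝ, (‖iteratedFDeriv ℝ k (h t) y‖₊ : ℝ≥0∞)) (μI t0 tf) := by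
  filter_upwards [ENNReal.ae_le_essSup
    (fun t => ⨆ y : Fin ny → ℝ, (‖iteratedFDeriv ℝ k (h t) y‖₊ : ℝ≥0∞))] with t ht x
  exact le_trans (le_iSup (fun y => (‖iteratedFDeriv ℝ k (h t) y‖₊ : ℝ≥0∞)) x) ht

end MeasAux

/-- evaluation operator, the special case `φ(t,y,g) = g` of Theorem 2.9.
The operator `Φ : L^∞(I)^{n_y} × (G²(I))^m → L^∞(I)^m`, `Φ(y,h) = h(·, y(·))`, is Fréchet
differentiable at every point with derivative `(δy, δh) ↦ h_y(·, y(·))δy(·) + δh(·, y(·))`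
(first conjunct), and its derivative depends continuously on the point `(y, h)` in the
operator norm (second conjunct). -/
theorem eval_operator_continuously_frechet_differentiable
    {ny m : ℕ} (t0 tf : ℝ) (ht : t0 < tf) :
    ∀ (y : ℝ → (Fin ny → ℝ)) (h : ℝ → (Fin ny → ℝ) → (Fin m → ℝ)),
      MemLinf t0 tf y → MemG t0 tf 2 h →
      -- Fréchet differentiability at (y, h) with derivative `evalOpDeriv y h`:
      (∀ ε : ℝ≥0∞, 0 < ε → ∃ δ : ℝ≥0∞, 0 < δ ∧
        ∀ δy δh, MemLinf t0 tf δy → MemG t0 tf 2 δh →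
          eLinf t0 tf δy + gNormE t0 tf 2 δh ≤ δ →
          eLinf t0 tf
              (fun t => evalOp (y + δy) (h + δh) t - evalOp y h t - evalOpDeriv y h δh δy t)
            ≤ ε * (eLinf t0 tf δy + gNormE t0 tf 2 δh)) ∧
      -- continuity of the Fréchet derivative in the operator norm:
      (∀ ε : ℝ≥0∞, 0 < ε → ∃ δ : ℝ≥0∞, 0 < δ ∧
        ∀ y' h', MemLinf t0 tf y' → MemG t0 tf 2 h' →
          eLinf t0 tf (y' - y) + gNormE t0 tf 2 (h' - h) ≤ δ →
          ∀ δy δh, MemLinf t0 tf δy → MemG t0 tf 2 δh →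
            eLinf t0 tf (fun t => evalOpDeriv y' h' δh δy t - evalOpDeriv y h δh δy t)
              ≤ ε * (eLinf t0 tf δy + gNormE t0 tf 2 δh)) := by
  intro y h hy hh
  obtain ⟨hmeas, hcd, hfin⟩ := hh
  set C2 : ℝ≥0∞ :=
    essSup (fun t => ⨆ z : Fin ny → ℝ, (‖iteratedFDeriv ℝ 2 (h t) z‖₊ : ℝ≥0∞)) (μI t0 tf)
    with hC2def
  have hC2fin : C2 ≠ ⊤ := ((Mk_le_gNorm t0 tf (by norm_num) h).trans_lt hfin).ne
  set D : ℝ≥0∞ := C2 + 2 with hDdef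
  have hD0 : D ≠ 0 := by simp [hDdef]
  have hDfin : D ≠ ⊤ := by
    simp only [hDdef, Ne, ENNReal.add_eq_top, not_or]
    exact ⟨hC2fin, by norm_num⟩
  constructor
  · -- Fréchet differentiability
    intro ε hε
    refine ⟨min 1 (ε / D), lt_min one_pos (ENNReal.div_pos hε.ne' hDfin), ?_⟩
    intro δy δh hδy hδh hS
    set S : ℝ≥0∞ := eLinf t0 tf δy + gNormE t0 tf 2 δh with hSdef
    have hδyS : eLinf t0 tf δy ≤ S := le_self_add
    have hδhS : gNormE t0 tf 2 δh ≤ S := le_add_self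
    set d1 : ℝ≥0∞ :=
      essSup (fun t => ⨆ z : Fin ny → ℝ, (‖iteratedFDeriv ℝ 1 (δh t) z‖₊ : ℝ≥0∞)) (μI t0 tf)
      with hd1def
    have hd1g : d1 ≤ gNormE t0 tf 2 δh := Mk_le_gNorm t0 tf (by norm_num) δh
    have hd1fin : d1 ≠ ⊤ := (hd1g.trans_lt hδh.2.2).ne
    show essSup _ (μI t0 tf) ≤ ε * S
    refine essSup_le_of_ae_le _ ?_
    filter_upwards [hcd, hδh.2.1, ae_iter_bound t0 tf 2 h, ae_iter_bound t0 tf 1 δh,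
      ENNReal.ae_le_essSup (fun t => (‖δy t‖₊ : ℝ≥0∞))] with t hth htδh hit2 hit1 hvt
    have hht : ContDiff ℝ 2 (h t) := by exact_mod_cast hth
    have hδht : ContDiff ℝ 2 (δh t) := by exact_mod_cast htδh
    have hC2r : ∀ x, ‖iteratedFDeriv ℝ 2 (h t) x‖ ≤ C2.toReal :=
      fun x => enorm_le_toReal hC2fin (hit2 x)
    have hd1r : ∀ x, ‖iteratedFDeriv ℝ 1 (δh t) x‖ ≤ d1.toReal :=
      fun x => enorm_le_toReal hd1fin (hit1 x)
    have hT := taylor_sq hht hC2r ENNReal.toReal_nonneg (y t) (δy t)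
    have hLip := lip_of_iter_one (hδht.differentiable (by norm_num)) hd1r
      (y t + δy t) (y t)
    have hexpr : evalOp (y + δy) (h + δh) t - evalOp y h t - evalOpDeriv y h δh δy t
        = (h t (y t + δy t) - h t (y t) - fderiv ℝ (h t) (y t) (δy t))
          + (δh t (y t + δy t) - δh t (y t)) := by
      simp only [evalOp, evalOpDeriv, Pi.add_apply]
      abel
    have hreal : ‖evalOp (y + δy) (h + δh) t - evalOp y h t - evalOpDeriv y h δh δy t‖
        ≤ C2.toReal * ‖δy t‖ * ‖δy t‖ + d1.toReal * ‖δy t‖ := by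
      rw [hexpr]
      refine (norm_add_le _ _).trans (add_le_add hT ?_)
      simpa [add_sub_cancel_left] using hLip
    have henn := enn_est _ (δy t) C2 d1 hC2fin hd1fin hreal
    have hvS : (‖δy t‖₊ : ℝ≥0∞) ≤ S := hvt.trans hδyS
    have hvδ : (‖δy t‖₊ : ℝ≥0∞) ≤ min 1 (ε / D) := hvt.trans (le_trans hδyS hS)
    have hd1δ : d1 ≤ min 1 (ε / D) := hd1g.trans (le_trans hδhS hS)
    calc (‖evalOp (y + δy) (h + δh) t - evalOp y h t - evalOpDeriv y h δh δy t‖₊ : ℝ≥0∞)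
        ≤ C2 * ‖δy t‖₊ * ‖δy t‖₊ + d1 * ‖δy t‖₊ := henn
      _ ≤ C2 * (min 1 (ε / D)) * S + (min 1 (ε / D)) * S :=
          add_le_add (mul_le_mul' (mul_le_mul' le_rfl hvδ) hvS) (mul_le_mul' hd1δ hvS)
      _ = (C2 + 1) * (min 1 (ε / D)) * S := by ring
      _ ≤ D * (ε / D) * S := by
          refine mul_le_mul' (mul_le_mul' ?_ (min_le_right _ _)) le_rfl
          rw [hDdef]
          exact add_le_add le_rfl one_le_two
      _ = ε * S := by rw [ENNReal.mul_div_cancel hD0 hDfin]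
  · -- continuity of the derivative
    intro ε hε
    refine ⟨min 1 (ε / D), lt_min one_pos (ENNReal.div_pos hε.ne' hDfin), ?_⟩
    intro y' h' hy' hh' hnear δy δh hδy hδh
    set S : ℝ≥0∞ := eLinf t0 tf δy + gNormE t0 tf 2 δh with hSdef
    have hδyS : eLinf t0 tf δy ≤ S := le_self_add
    have hδhS : gNormE t0 tf 2 δh ≤ S := le_add_self
    have hyy : eLinf t0 tf (y' - y) ≤ min 1 (ε / D) := le_trans le_self_add hnear
    have hhh : gNormE t0 tf 2 (h' - h) ≤ min 1 (ε / D) := le_trans le_add_self hnear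
    set d1 : ℝ≥0∞ :=
      essSup (fun t => ⨆ z : Fin ny → ℝ, (‖iteratedFDeriv ℝ 1 ((h' - h) t) z‖₊ : ℝ≥0∞))
        (μI t0 tf) with hd1def
    have hd1g : d1 ≤ gNormE t0 tf 2 (h' - h) := Mk_le_gNorm t0 tf (by norm_num) (h' - h)
    have hd1δ : d1 ≤ min 1 (ε / D) := hd1g.trans hhh
    have hd1fin : d1 ≠ ⊤ := by
      refine ne_top_of_le_ne_top ?_ (hd1δ.trans (min_le_left _ _))
      exact ENNReal.one_ne_top
    set e1 : ℝ≥0∞ :=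
      essSup (fun t => ⨆ z : Fin ny → ℝ, (‖iteratedFDeriv ℝ 1 (δh t) z‖₊ : ℝ≥0∞)) (μI t0 tf)
      with he1def
    have he1g : e1 ≤ gNormE t0 tf 2 δh := Mk_le_gNorm t0 tf (by norm_num) δh
    have he1fin : e1 ≠ ⊤ := (he1g.trans_lt hδh.2.2).ne
    show essSup _ (μI t0 tf) ≤ ε * S
    refine essSup_le_of_ae_le _ ?_
    filter_upwards [hcd, hh'.2.1, hδh.2.1, ae_iter_bound t0 tf 2 h,
      ae_iter_bound t0 tf 1 (h' - h), ae_iter_bound t0 tf 1 δh,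
      ENNReal.ae_le_essSup (fun t => (‖δy t‖₊ : ℝ≥0∞)),
      ENNReal.ae_le_essSup (fun t => (‖(y' - y) t‖₊ : ℝ≥0∞))]
      with t hth hth' htδh hit2 hit1 hite hvt hut
    have hht : ContDiff ℝ 2 (h t) := by exact_mod_cast hth
    have hht' : ContDiff ℝ 2 (h' t) := by exact_mod_cast hth'
    have hδht : ContDiff ℝ 2 (δh t) := by exact_mod_cast htδh
    have hC2r : ∀ x, ‖iteratedFDeriv ℝ 2 (h t) x‖ ≤ C2.toReal :=
      fun x => enorm_le_toReal hC2fin (hit2 x)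
    have hd1r : ∀ x, ‖iteratedFDeriv ℝ 1 ((h' - h) t) x‖ ≤ d1.toReal :=
      fun x => enorm_le_toReal hd1fin (hit1 x)
    have he1r : ∀ x, ‖iteratedFDeriv ℝ 1 (δh t) x‖ ≤ e1.toReal :=
      fun x => enorm_le_toReal he1fin (hite x)
    -- the operator difference
    have hsub : fderiv ℝ (h' t) (y' t) - fderiv ℝ (h t) (y' t)
        = fderiv ℝ ((h' - h) t) (y' t) := by
      have : (h' - h) t = fun z => h' t z - h t z := rfl
      rw [this, fderiv_fun_sub (hht'.differentiable (by norm_num) (y' t))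
        (hht.differentiable (by norm_num) (y' t))]
    have hA : ‖fderiv ℝ (h' t) (y' t) - fderiv ℝ (h t) (y t)‖
        ≤ d1.toReal + C2.toReal * ‖y' t - y t‖ := by
      have hdecomp : fderiv ℝ (h' t) (y' t) - fderiv ℝ (h t) (y t)
          = (fderiv ℝ (h' t) (y' t) - fderiv ℝ (h t) (y' t))
            + (fderiv ℝ (h t) (y' t) - fderiv ℝ (h t) (y t)) := by abel
      rw [hdecomp]
      refine (norm_add_le _ _).trans (add_le_add ?_ ?_)
      · rw [hsub, norm_fderiv_eq_iter_one]
        exact hd1r (y' t)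
      · exact fderiv_lip hht hC2r (y' t) (y t)
    have hexpr : evalOpDeriv y' h' δh δy t - evalOpDeriv y h δh δy t
        = (fderiv ℝ (h' t) (y' t) - fderiv ℝ (h t) (y t)) (δy t)
          + (δh t (y' t) - δh t (y t)) := by
      simp only [evalOpDeriv, ContinuousLinearMap.sub_apply]
      abel
    have hreal : ‖evalOpDeriv y' h' δh δy t - evalOpDeriv y h δh δy t‖
        ≤ d1.toReal * ‖δy t‖ + C2.toReal * ‖y' t - y t‖ * ‖δy t‖
          + e1.toReal * ‖y' t - y t‖ := by
      rw [hexpr]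
      refine (norm_add_le _ _).trans ?_
      have h1 : ‖(fderiv ℝ (h' t) (y' t) - fderiv ℝ (h t) (y t)) (δy t)‖
          ≤ (d1.toReal + C2.toReal * ‖y' t - y t‖) * ‖δy t‖ :=
        le_trans ((fderiv ℝ (h' t) (y' t) - fderiv ℝ (h t) (y t)).le_opNorm (δy t))
          (mul_le_mul_of_nonneg_right hA (norm_nonneg _))
      have h2 : ‖δh t (y' t) - δh t (y t)‖ ≤ e1.toReal * ‖y' t - y t‖ :=
        lip_of_iter_one (hδht.differentiable (by norm_num)) he1r (y' t) (y t)
      calc _ ≤ (d1.toReal + C2.toReal * ‖y' t - y t‖) * ‖δy t‖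
            + e1.toReal * ‖y' t - y t‖ := add_le_add h1 h2
        _ = d1.toReal * ‖δy t‖ + C2.toReal * ‖y' t - y t‖ * ‖δy t‖
            + e1.toReal * ‖y' t - y t‖ := by ring
    have henn := enn_est2 _ (y' t - y t) (δy t) C2 d1 e1 hC2fin hd1fin he1fin hreal
    have hu : (‖y' t - y t‖₊ : ℝ≥0∞) ≤ min 1 (ε / D) := by
      have : (‖(y' - y) t‖₊ : ℝ≥0∞) ≤ eLinf t0 tf (y' - y) := hut
      simpa [Pi.sub_apply] using this.trans hyy
    have hvS : (‖δy t‖₊ : ℝ≥0∞) ≤ S := hvt.trans hδyS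
    have he1S : e1 ≤ S := he1g.trans hδhS
    calc (‖evalOpDeriv y' h' δh δy t - evalOpDeriv y h δh δy t‖₊ : ℝ≥0∞)
        ≤ d1 * ‖δy t‖₊ + C2 * ‖y' t - y t‖₊ * ‖δy t‖₊ + e1 * ‖y' t - y t‖₊ := henn
      _ ≤ (min 1 (ε / D)) * S + C2 * (min 1 (ε / D)) * S + S * (min 1 (ε / D)) :=
          add_le_add (add_le_add (mul_le_mul' hd1δ hvS)
            (mul_le_mul' (mul_le_mul' le_rfl hu) hvS)) (mul_le_mul' he1S hu)
      _ = (C2 + 2) * (min 1 (ε / D)) * S := by ring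
      _ ≤ D * (ε / D) * S := by
          refine mul_le_mul' (mul_le_mul' (le_of_eq hDdef.symm) (min_le_right _ _)) le_rfl
      _ = ε * S := by rw [ENNReal.mul_div_cancel hD0 hDfin]


end
end

section
/- In the setting of the LQOCP on I = (t₀, t_f) with essentially bounded coefficient matrices A, B, C, essentially bounded Hamiltonian Hessian blocks H_xx, H_ux, H_uu, H_up, essentially bounded data c_u, r, and r₀ ∈ ℝ^{n_x}, suppose (δx, δu, δp, δλ) ∈ W^{1,2}(I)^{n_x} × L²(I)^{n_u} × ℝ^{n_p} × W^{1,2}(I)^{n_x} satisfies a.e. on I the stationarity condition H_ux(t)δx(t) + H_uu(t)δu(t) + H_up(t)δp + B(t)ᵀδλ(t) = −c_u(t), the state equation δx'(t) = A(t)δx(t) + B(t)δu(t) + C(t)δp + r(t) with δx(t₀) = r₀, and the adjoint equation −δλ'(t) = H_xx(t)δx(t) + H_xu(t)δu(t) + H_xp(t)δp + A(t)ᵀδλ(t) + c_x(t) with c_x, H_xu, H_xp essentially bounded and terminal condition δλ(t_f) given by a linear expression in δx(t_f) and δp. If in addition H_uu(t) is invertible for almost all t ∈ I with ‖H_uu(t)^{-1}‖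 ≤ M for some M > 0, then δu ∈ L^∞(I)^{n_u}, δx ∈ W^{1,∞}(I)^{n_x}, and δλ ∈ W^{1,∞}(I)^{n_x}. -/
open MeasureTheory Set
open scoped NNReal ENNReal

noncomputable section

/-- Vectors in `ℝⁿ`. -/
abbrev Vec (n : ℕ) := Fin n → ℝ

/-- `Aᵀ v` for a continuous linear map `A : ℝⁿ → ℝᵐ`: `(Aᵀ v)ᵢ = Σⱼ vⱼ (A eᵢ)ⱼ`. -/
def clmT {n m : ℕ} (A : Vec n →L[ℝ] Vec m) (v : Vec m) : Vec n :=
  fun i => ∑ j, v j * A (Pi.single i (1 : ℝ)) j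

/-- Essential boundedness together with a.e.-measurability (membership in `L^∞(I)`),
for functions with values in any normed space. -/
def EssBdd {E : Type*} [NormedAddCommGroup E] (t0 tf : ℝ) (F : ℝ → E) : Prop :=
  AEStronglyMeasurable F (μI t0 tf) ∧ ∃ c : ℝ, ∀ᵐ t ∂(μI t0 tf), ‖F t‖ ≤ c

private lemma norm_add4_le {E : Type*} [SeminormedAddGroup E] (a b c d : E) :
    ‖a + b + c + d‖ ≤ ‖a‖ + ‖b‖ + ‖c‖ + ‖d‖ := by
  have h1 := norm_add_le (a + b + c) d
  have h2 := norm_add_le (a + b) c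
  have h3 := norm_add_le a b
  linarith

private lemma norm_add5_le {E : Type*} [SeminormedAddGroup E] (a b c d e : E) :
    ‖a + b + c + d + e‖ ≤ ‖a‖ + ‖b‖ + ‖c‖ + ‖d‖ + ‖e‖ := by
  have h1 := norm_add_le (a + b + c + d) e
  have h2 := norm_add4_le a b c d
  linarith

private lemma clmT_norm_le {n m : ℕ} (A : Vec n →L[ℝ] Vec m) (v : Vec m) :
    ‖clmT A v‖ ≤ (m : ℝ) * ‖A‖ * ‖v‖ := by
  have hnn : (0:ℝ) ≤ (m:ℝ) * ‖A‖ * ‖v‖ := by positivity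
  rw [pi_norm_le_iff_of_nonneg hnn]
  intro i
  simp only [clmT, Real.norm_eq_abs]
  have hsingle : ‖(Pi.single i (1:ℝ) : Vec n)‖ ≤ 1 := by
    rw [pi_norm_le_iff_of_nonneg zero_le_one]
    intro k
    rw [Real.norm_eq_abs, Pi.single_apply]
    split <;> simp
  calc |∑ j, v j * A (Pi.single i (1:ℝ)) j|
      ≤ ∑ j : Fin m, |v j * A (Pi.single i (1:ℝ)) j| := Finset.abs_sum_le_sum_abs _ _
    _ ≤ ∑ _j : Fin m, ‖A‖ * ‖v‖ := by
        refine Finset.sum_le_sum fun j _ => ?_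
        rw [abs_mul]
        have h1 : |v j| ≤ ‖v‖ := norm_le_pi_norm v j
        have h2 : |A (Pi.single i (1:ℝ)) j| ≤ ‖A‖ := by
          refine (norm_le_pi_norm (A (Pi.single i (1:ℝ))) j).trans ?_
          calc ‖A (Pi.single i (1:ℝ))‖ ≤ ‖A‖ * ‖(Pi.single i (1:ℝ) : Vec n)‖ :=
                A.le_opNorm _
            _ ≤ ‖A‖ * 1 := by
                exact mul_le_mul_of_nonneg_left hsingle (norm_nonneg _)
            _ = ‖A‖ := mul_one _
        calc |v j| * |A (Pi.single i (1:ℝ)) j| ≤ ‖v‖ * ‖A‖ :=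
              mul_le_mul h1 h2 (abs_nonneg _) (norm_nonneg _)
          _ = ‖A‖ * ‖v‖ := mul_comm _ _
    _ = (m : ℝ) * (‖A‖ * ‖v‖) := by
        rw [Finset.sum_const, Finset.card_univ, Fintype.card_fin, nsmul_eq_mul]
    _ = (m : ℝ) * ‖A‖ * ‖v‖ := (mul_assoc _ _ _).symm

private lemma clmT_continuous {n m : ℕ} :
    Continuous (fun p : (Vec n →L[ℝ] Vec m) × Vec m => clmT p.1 p.2) := by
  refine continuous_pi fun i => ?_
  refine continuous_finset_sum _ fun j _ => ?_
  exact ((continuous_apply j).comp continuous_snd).mul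
    ((continuous_apply j).comp
      (isBoundedBilinearMap_apply.continuous.comp
        (continuous_fst.prodMk continuous_const)))

private lemma aesm_apply {α : Type*} [MeasurableSpace α] {μ : Measure α} {n m : ℕ}
    {F : α → (Vec n →L[ℝ] Vec m)} {f : α → Vec n}
    (hF : AEStronglyMeasurable F μ) (hf : AEStronglyMeasurable f μ) :
    AEStronglyMeasurable (fun t => F t (f t)) μ :=
  isBoundedBilinearMap_apply.continuous.comp_aestronglyMeasurable (hF.prodMk hf)

private lemma aesm_clmT {α : Type*} [MeasurableSpace α] {μ : Measure α} {n m : ℕ}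
    {F : α → (Vec n →L[ℝ] Vec m)} {f : α → Vec m}
    (hF : AEStronglyMeasurable F μ) (hf : AEStronglyMeasurable f μ) :
    AEStronglyMeasurable (fun t => clmT (F t) (f t)) μ :=
  clmT_continuous.comp_aestronglyMeasurable (hF.prodMk hf)

private lemma lipschitzOn_of_sub_integral {n : ℕ} {t0 tf : ℝ} {f g : ℝ → Vec n} {K : ℝ}
    (hK : 0 ≤ K)
    (hbdd : ∀ᵐ t ∂(volume.restrict (Icc t0 tf)), ‖g t‖ ≤ K)
    (hdiff : ∀ a ∈ Icc t0 tf, ∀ b ∈ Icc t0 tf, f a - f b = ∫ s in b..a, g s) :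
    LipschitzOnWith (Real.toNNReal K) f (Icc t0 tf) := by
  rw [lipschitzOnWith_iff_dist_le_mul]
  intro a ha b hb
  rw [dist_eq_norm, Real.dist_eq, Real.coe_toNNReal _ hK]
  have hsub : Set.uIoc b a ⊆ Icc t0 tf := uIoc_subset_uIcc.trans (uIcc_subset_Icc hb ha)
  calc ‖f a - f b‖ = ‖∫ s in b..a, g s‖ := by rw [hdiff a ha b hb]
    _ ≤ |∫ _s in b..a, K| := intervalIntegral.norm_integral_le_abs_of_norm_le
        (ae_restrict_of_ae_restrict_of_subset hsub hbdd) intervalIntegrable_const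
    _ = K * |a - b| := by
        rw [intervalIntegral.integral_const, smul_eq_mul, abs_mul, abs_of_nonneg hK, mul_comm]

set_option maxHeartbeats 1000000 in
/-- regularity bootstrap in the proof of Lemma 2.17.  If
`(δx, δu, δp, dl) ∈ W^{1,2} × L² × ℝ^{n_p} × W^{1,2}` satisfies the stationarity condition
`H_ux δx + H_uu δu + H_up δp + Bᵀdl = −c_u` a.e., the state equation
`δx' = A δx + B δu + C δp + r`, `δx(t₀) = r₀`, and the adjoint equation
`−dl' = H_xx δx + H_xu δu + H_xp δp + Aᵀdl + c_x` with terminal value `dl(t_f)` a linear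
expression in `δx(t_f)` and `δp` (all coefficients essentially bounded), and if `H_uu(t)`
is invertible a.e. with `‖H_uu(t)⁻¹‖ ≤ M`, then `δu ∈ L^∞(I)^{n_u}` and
`δx, dl ∈ W^{1,∞}(I)^{n_x}` (i.e. they are Lipschitz on `[t₀, t_f]`). -/
theorem lq_regularity_bootstrap
    {nx nu np : ℕ} (t0 tf : ℝ) (ht : t0 < tf)
    (A : ℝ → (Vec nx →L[ℝ] Vec nx)) (B : ℝ → (Vec nu →L[ℝ] Vec nx))
    (C : ℝ → (Vec np →L[ℝ] Vec nx))
    (Hxx : ℝ → (Vec nx →L[ℝ] Vec nx)) (Hxu : ℝ → (Vec nu →L[ℝ] Vec nx))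
    (Hxp : ℝ → (Vec np →L[ℝ] Vec nx))
    (Hux : ℝ → (Vec nx →L[ℝ] Vec nu)) (Huu : ℝ → (Vec nu →L[ℝ] Vec nu))
    (Hup : ℝ → (Vec np →L[ℝ] Vec nu))
    (cx : ℝ → Vec nx) (cu : ℝ → Vec nu) (r : ℝ → Vec nx) (r0 : Vec nx)
    (T1 : Vec nx →L[ℝ] Vec nx) (T2 : Vec np →L[ℝ] Vec nx)
    (δx : ℝ → Vec nx) (δu : ℝ → Vec nu) (δp : Vec np) (dl : ℝ → Vec nx)
    -- essentially bounded coefficients and data: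
    (hA : EssBdd t0 tf A) (hB : EssBdd t0 tf B) (hC : EssBdd t0 tf C)
    (hHxx : EssBdd t0 tf Hxx) (hHxu : EssBdd t0 tf Hxu) (hHxp : EssBdd t0 tf Hxp)
    (hHux : EssBdd t0 tf Hux) (hHuu : EssBdd t0 tf Huu) (hHup : EssBdd t0 tf Hup)
    (hcx : EssBdd t0 tf cx) (hcu : EssBdd t0 tf cu) (hr : EssBdd t0 tf r)
    -- (δx, δu, δp, dl) ∈ W^{1,2} × L² × ℝ^{n_p} × W^{1,2}:
    (hδu_meas : AEStronglyMeasurable δu (μI t0 tf)) (hδu_L2 : MemLp δu 2 (μI t0 tf))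
    (hδx_cont : ContinuousOn δx (Set.Icc t0 tf))
    (hdl_cont : ContinuousOn dl (Set.Icc t0 tf))
    -- the stationarity condition a.e. on I:
    (hstat : ∀ᵐ t ∂(μI t0 tf),
      Hux t (δx t) + Huu t (δu t) + Hup t δp + clmT (B t) (dl t) = -(cu t))
    -- the state equation (integral form), δx(t₀) = r₀:
    (hstate : ∀ t ∈ Set.Icc t0 tf,
      δx t = r0 + ∫ s in t0..t, (A s (δx s) + B s (δu s) + C s δp + r s))
    -- the adjoint equation (integral form) with terminal value T1 δx(t_f) + T2 δp:
    (hadj : ∀ t ∈ Set.Icc t0 tf,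
      dl t = T1 (δx tf) + T2 δp
        + ∫ s in t..tf,
            (Hxx s (δx s) + Hxu s (δu s) + Hxp s δp + clmT (A s) (dl s) + cx s))
    -- H_uu(t) invertible a.e. with uniformly bounded inverse:
    (hinv : ∃ M : ℝ, 0 < M ∧ ∃ Hinv : ℝ → (Vec nu →L[ℝ] Vec nu),
      ∀ᵐ t ∂(μI t0 tf),
        (∀ v, Hinv t (Huu t v) = v ∧ Huu t (Hinv t v) = v) ∧ ‖Hinv t‖ ≤ M) :
    -- δu ∈ L^∞(I)^{n_u}, δx ∈ W^{1,∞}(I)^{n_x}, dl ∈ W^{1,∞}(I)^{n_x}: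
    (∃ Cu : ℝ, ∀ᵐ t ∂(μI t0 tf), ‖δu t‖ ≤ Cu) ∧
    (∃ Kx : ℝ≥0, LipschitzOnWith Kx δx (Set.Icc t0 tf)) ∧
    (∃ Kl : ℝ≥0, LipschitzOnWith Kl dl (Set.Icc t0 tf)) := by
  classical
  obtain ⟨M, hM, Hinv, hHinv⟩ := hinv
  obtain ⟨hAm, cA, hcA⟩ := hA
  obtain ⟨hBm, cB, hcB⟩ := hB
  obtain ⟨hCm, cC, hcC⟩ := hC
  obtain ⟨hHxxm, cHxx, hcHxx⟩ := hHxx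
  obtain ⟨hHxum, cHxu, hcHxu⟩ := hHxu
  obtain ⟨hHxpm, cHxp, hcHxp⟩ := hHxp
  obtain ⟨hHuxm, cHux, hcHux⟩ := hHux
  obtain ⟨hHupm, cHup, hcHup⟩ := hHup
  obtain ⟨hcxm, ccx, hccx⟩ := hcx
  obtain ⟨hcum, ccu, hccu⟩ := hcu
  obtain ⟨hrm, cr, hcr⟩ := hr
  -- the measure is finite and nonzero
  haveI hfin : IsFiniteMeasure (μI t0 tf) := by
    refine ⟨?_⟩
    rw [μI, Measure.restrict_apply_univ, Real.volume_Ioo]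
    exact ENNReal.ofReal_lt_top
  have hμne : μI t0 tf ≠ 0 := by
    rw [μI]
    intro h
    rw [Measure.restrict_eq_zero, Real.volume_Ioo] at h
    exact absurd h (ne_of_gt (ENNReal.ofReal_pos.2 (sub_pos.2 ht)))
  haveI : (ae (μI t0 tf)).NeBot := ae_neBot.2 hμne
  have hμeq : μI t0 tf = volume.restrict (Icc t0 tf) :=
    Measure.restrict_congr_set Ioo_ae_eq_Icc
  have hmemIoo : ∀ᵐ t ∂(μI t0 tf), t ∈ Ioo t0 tf := by
    rw [μI]; exact ae_restrict_mem measurableSet_Ioo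
  -- nonnegativity of the essential bounds
  have h0A : 0 ≤ cA := let ⟨t, h⟩ := hcA.exists; (norm_nonneg _).trans h
  have h0B : 0 ≤ cB := let ⟨t, h⟩ := hcB.exists; (norm_nonneg _).trans h
  have h0C : 0 ≤ cC := let ⟨t, h⟩ := hcC.exists; (norm_nonneg _).trans h
  have h0Hxx : 0 ≤ cHxx := let ⟨t, h⟩ := hcHxx.exists; (norm_nonneg _).trans h
  have h0Hxu : 0 ≤ cHxu := let ⟨t, h⟩ := hcHxu.exists; (norm_nonneg _).trans h
  have h0Hxp : 0 ≤ cHxp := let ⟨t, h⟩ := hcHxp.exists; (norm_nonneg _).trans h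
  have h0Hux : 0 ≤ cHux := let ⟨t, h⟩ := hcHux.exists; (norm_nonneg _).trans h
  have h0Hup : 0 ≤ cHup := let ⟨t, h⟩ := hcHup.exists; (norm_nonneg _).trans h
  have h0cx : 0 ≤ ccx := let ⟨t, h⟩ := hccx.exists; (norm_nonneg _).trans h
  have h0cu : 0 ≤ ccu := let ⟨t, h⟩ := hccu.exists; (norm_nonneg _).trans h
  have h0r : 0 ≤ cr := let ⟨t, h⟩ := hcr.exists; (norm_nonneg _).trans h
  -- pointwise bounds for the continuous functions on the compact interval
  obtain ⟨Cx, hCx⟩ := isCompact_Icc.exists_bound_of_continuousOn hδx_cont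
  obtain ⟨Cl, hCl⟩ := isCompact_Icc.exists_bound_of_continuousOn hdl_cont
  have ht0mem : t0 ∈ Icc t0 tf := left_mem_Icc.2 ht.le
  have htfmem : tf ∈ Icc t0 tf := right_mem_Icc.2 ht.le
  have h0Cx : 0 ≤ Cx := (norm_nonneg _).trans (hCx t0 ht0mem)
  have h0Cl : 0 ≤ Cl := (norm_nonneg _).trans (hCl t0 ht0mem)
  -- the essential bound for δu
  set Cu : ℝ := M * (ccu + cHux * Cx + cHup * ‖δp‖ + (nx : ℝ) * cB * Cl) with hCudef
  have h0Cu : 0 ≤ Cu := by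
    apply mul_nonneg hM.le
    have : (0:ℝ) ≤ (nx : ℝ) * cB * Cl := by positivity
    have h2 : (0:ℝ) ≤ cHux * Cx := mul_nonneg h0Hux h0Cx
    have h3 : (0:ℝ) ≤ cHup * ‖δp‖ := mul_nonneg h0Hup (norm_nonneg _)
    linarith
  have hδu_bdd : ∀ᵐ t ∂(μI t0 tf), ‖δu t‖ ≤ Cu := by
    filter_upwards [hstat, hHinv, hccu, hcHux, hcHup, hcB, hmemIoo]
      with t h1 h2 h3 h4 h5 h6 h7
    have hxmem : t ∈ Icc t0 tf := Ioo_subset_Icc_self h7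
    have hEq : Huu t (δu t)
        = -(cu t) - Hux t (δx t) - Hup t δp - clmT (B t) (dl t) := by
      rw [← h1]; abel
    have hrepr : δu t
        = Hinv t (-(cu t) - Hux t (δx t) - Hup t δp - clmT (B t) (dl t)) := by
      rw [← hEq]; exact ((h2.1 (δu t)).1).symm
    have hbound : ‖-(cu t) - Hux t (δx t) - Hup t δp - clmT (B t) (dl t)‖
        ≤ ccu + cHux * Cx + cHup * ‖δp‖ + (nx : ℝ) * cB * Cl := by
      have e0 : -(cu t) - Hux t (δx t) - Hup t δp - clmT (B t) (dl t)
          = -(cu t + Hux t (δx t) + Hup t δp + clmT (B t) (dl t)) := by abel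
      rw [e0, norm_neg]
      refine (norm_add4_le _ _ _ _).trans ?_
      have e1 : ‖cu t‖ ≤ ccu := h3
      have e2 : ‖Hux t (δx t)‖ ≤ cHux * Cx :=
        ((Hux t).le_opNorm _).trans (mul_le_mul h4 (hCx t hxmem) (norm_nonneg _) h0Hux)
      have e3 : ‖Hup t δp‖ ≤ cHup * ‖δp‖ :=
        ((Hup t).le_opNorm _).trans (mul_le_mul_of_nonneg_right h5 (norm_nonneg _))
      have e4 : ‖clmT (B t) (dl t)‖ ≤ (nx : ℝ) * cB * Cl := by
        refine (clmT_norm_le _ _).trans ?_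
        calc (nx : ℝ) * ‖B t‖ * ‖dl t‖ ≤ (nx : ℝ) * cB * ‖dl t‖ := by
              have := mul_le_mul_of_nonneg_left h6 (Nat.cast_nonneg nx : (0:ℝ) ≤ nx)
              exact mul_le_mul_of_nonneg_right this (norm_nonneg _)
          _ ≤ (nx : ℝ) * cB * Cl := by
              have hnB : (0:ℝ) ≤ (nx : ℝ) * cB := by positivity
              exact mul_le_mul_of_nonneg_left (hCl t hxmem) hnB
      linarith
    calc ‖δu t‖ = ‖Hinv t (-(cu t) - Hux t (δx t) - Hup t δp - clmT (B t) (dl t))‖ := by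
          rw [← hrepr]
      _ ≤ ‖Hinv t‖ * ‖-(cu t) - Hux t (δx t) - Hup t δp - clmT (B t) (dl t)‖ :=
          (Hinv t).le_opNorm _
      _ ≤ Cu := by
          rw [hCudef]
          exact mul_le_mul h2.2 hbound (norm_nonneg _) hM.le
  -- measurability of δx and dl with respect to μI
  have hxasm : AEStronglyMeasurable δx (μI t0 tf) := by
    rw [μI]
    exact (hδx_cont.mono Ioo_subset_Icc_self).aestronglyMeasurable measurableSet_Ioo
  have hlasm : AEStronglyMeasurable dl (μI t0 tf) := by
    rw [μI]
    exact (hdl_cont.mono Ioo_subset_Icc_self).aestronglyMeasurable measurableSet_Ioo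
  -- the state-equation integrand
  set gx : ℝ → Vec nx := fun s => A s (δx s) + B s (δu s) + C s δp + r s with hgxdef
  set Kx : ℝ := cA * Cx + cB * Cu + cC * ‖δp‖ + cr with hKxdef
  have h0Kx : 0 ≤ Kx := by
    have h1 : (0:ℝ) ≤ cA * Cx := mul_nonneg h0A h0Cx
    have h2 : (0:ℝ) ≤ cB * Cu := mul_nonneg h0B h0Cu
    have h3 : (0:ℝ) ≤ cC * ‖δp‖ := mul_nonneg h0C (norm_nonneg _)
    rw [hKxdef]; linarith
  have hgxasm : AEStronglyMeasurable gx (μI t0 tf) :=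
    (((aesm_apply hAm hxasm).add (aesm_apply hBm hδu_meas)).add
      (aesm_apply hCm aestronglyMeasurable_const)).add hrm
  have hgxbdd : ∀ᵐ t ∂(μI t0 tf), ‖gx t‖ ≤ Kx := by
    filter_upwards [hδu_bdd, hcA, hcB, hcC, hcr, hmemIoo] with t hu h1 h2 h3 h4 h5
    have hxmem : t ∈ Icc t0 tf := Ioo_subset_Icc_self h5
    have e1 : ‖A t (δx t)‖ ≤ cA * Cx :=
      ((A t).le_opNorm _).trans (mul_le_mul h1 (hCx t hxmem) (norm_nonneg _) h0A)
    have e2 : ‖B t (δu t)‖ ≤ cB * Cu :=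
      ((B t).le_opNorm _).trans (mul_le_mul h2 hu (norm_nonneg _) h0B)
    have e3 : ‖C t δp‖ ≤ cC * ‖δp‖ :=
      ((C t).le_opNorm _).trans (mul_le_mul_of_nonneg_right h3 (norm_nonneg _))
    have := norm_add4_le (A t (δx t)) (B t (δu t)) (C t δp) (r t)
    rw [hgxdef, hKxdef]
    simp only
    linarith
  have hgxint : IntegrableOn gx (Icc t0 tf) volume := by
    have hInt : Integrable gx (μI t0 tf) :=
      ⟨hgxasm, HasFiniteIntegral.of_bounded hgxbdd⟩
    rwa [hμeq] at hInt
  -- the adjoint-equation integrand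
  set gl : ℝ → Vec nx := fun s =>
    Hxx s (δx s) + Hxu s (δu s) + Hxp s δp + clmT (A s) (dl s) + cx s with hgldef
  set Kl : ℝ := cHxx * Cx + cHxu * Cu + cHxp * ‖δp‖ + (nx : ℝ) * cA * Cl + ccx with hKldef
  have h0Kl : 0 ≤ Kl := by
    have h1 : (0:ℝ) ≤ cHxx * Cx := mul_nonneg h0Hxx h0Cx
    have h2 : (0:ℝ) ≤ cHxu * Cu := mul_nonneg h0Hxu h0Cu
    have h3 : (0:ℝ) ≤ cHxp * ‖δp‖ := mul_nonneg h0Hxp (norm_nonneg _)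
    have h4 : (0:ℝ) ≤ (nx : ℝ) * cA * Cl := by positivity
    rw [hKldef]; linarith
  have hglasm : AEStronglyMeasurable gl (μI t0 tf) :=
    ((((aesm_apply hHxxm hxasm).add (aesm_apply hHxum hδu_meas)).add
      (aesm_apply hHxpm aestronglyMeasurable_const)).add
        (aesm_clmT hAm hlasm)).add hcxm
  have hglbdd : ∀ᵐ t ∂(μI t0 tf), ‖gl t‖ ≤ Kl := by
    filter_upwards [hδu_bdd, hcHxx, hcHxu, hcHxp, hcA, hccx, hmemIoo]
      with t hu h1 h2 h3 h4 h5 h6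
    have hxmem : t ∈ Icc t0 tf := Ioo_subset_Icc_self h6
    have e1 : ‖Hxx t (δx t)‖ ≤ cHxx * Cx :=
      ((Hxx t).le_opNorm _).trans (mul_le_mul h1 (hCx t hxmem) (norm_nonneg _) h0Hxx)
    have e2 : ‖Hxu t (δu t)‖ ≤ cHxu * Cu :=
      ((Hxu t).le_opNorm _).trans (mul_le_mul h2 hu (norm_nonneg _) h0Hxu)
    have e3 : ‖Hxp t δp‖ ≤ cHxp * ‖δp‖ :=
      ((Hxp t).le_opNorm _).trans (mul_le_mul_of_nonneg_right h3 (norm_nonneg _))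
    have e4 : ‖clmT (A t) (dl t)‖ ≤ (nx : ℝ) * cA * Cl := by
      refine (clmT_norm_le _ _).trans ?_
      calc (nx : ℝ) * ‖A t‖ * ‖dl t‖ ≤ (nx : ℝ) * cA * ‖dl t‖ :=
            mul_le_mul_of_nonneg_right
              (mul_le_mul_of_nonneg_left h4 (Nat.cast_nonneg nx)) (norm_nonneg _)
        _ ≤ (nx : ℝ) * cA * Cl :=
            mul_le_mul_of_nonneg_left (hCl t hxmem) (by positivity)
    have := norm_add5_le (Hxx t (δx t)) (Hxu t (δu t)) (Hxp t δp)
      (clmT (A t) (dl t)) (cx t)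
    rw [hgldef, hKldef]
    simp only
    linarith
  have hglint : IntegrableOn gl (Icc t0 tf) volume := by
    have hInt : Integrable gl (μI t0 tf) :=
      ⟨hglasm, HasFiniteIntegral.of_bounded hglbdd⟩
    rwa [hμeq] at hInt
  -- interval integrability of both integrands on subintervals
  have hii : ∀ (g : ℝ → Vec nx), IntegrableOn g (Icc t0 tf) volume →
      ∀ a ∈ Icc t0 tf, ∀ b ∈ Icc t0 tf, IntervalIntegrable g volume a b :=
    fun g hg a ha b hb => intervalIntegrable_iff.2
      (hg.mono_set (uIoc_subset_uIcc.trans (uIcc_subset_Icc ha hb)))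
  refine ⟨⟨Cu, hδu_bdd⟩, ⟨Real.toNNReal Kx, ?_⟩, ⟨Real.toNNReal Kl, ?_⟩⟩
  · -- δx is Lipschitz
    have hgxbdd' : ∀ᵐ t ∂(volume.restrict (Icc t0 tf)), ‖gx t‖ ≤ Kx := by
      rwa [hμeq] at hgxbdd
    refine lipschitzOn_of_sub_integral h0Kx hgxbdd' ?_
    intro a ha b hb
    rw [hstate a ha, hstate b hb, add_sub_add_left_eq_sub]
    exact intervalIntegral.integral_interval_sub_left
      (hii gx hgxint t0 ht0mem a ha) (hii gx hgxint t0 ht0mem b hb)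
  · -- dl is Lipschitz (with integrand -gl)
    have hbddneg : ∀ᵐ t ∂(volume.restrict (Icc t0 tf)), ‖(-(gl t) : Vec nx)‖ ≤ Kl := by
      rw [← hμeq]
      filter_upwards [hglbdd] with t h
      rwa [norm_neg]
    refine lipschitzOn_of_sub_integral h0Kl hbddneg ?_
    intro a ha b hb
    rw [hadj a ha, hadj b hb, add_sub_add_left_eq_sub]
    have hadd := intervalIntegral.integral_add_adjacent_intervals
      (hii gl hglint a ha b hb) (hii gl hglint b hb tf htfmem)
    have hneg : (∫ s in b..a, -(gl s)) = ∫ s in a..b, gl s := by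
      rw [intervalIntegral.integral_neg, ← intervalIntegral.integral_symm]
    rw [hneg, ← hadd, add_sub_cancel_right]

end
end
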